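/- det(S(z)) = (-1)ⁿ z^{2m} W(1/z)/W(z), where W(z) = det γ(z), γ(z) = z²(P̂ₙ - 1) + zĤ - 1, and S(z) is the upper-left n×n block of -γ(z)⁻¹γ(1/z), valid whenever z ≠ 0 and γ(z) is invertible. -/

import Mathlib

open Matrix

/-- Orthogonal projection onto the first `n` coordinates of `ℂ^(n+m)`. -/
noncomputable def Pn (n m : ℕ) : Matrix (Fin n ⊕ Fin m) (Fin n ⊕ Fin m) ℂ :=
  Matrix.fromBlocks 1 0 0 0

/-- `γ(z) = z²(P̂ₙ - 1) + zĤ - 1`. -/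
noncomputable def gam {n m : ℕ} (H : Matrix (Fin n ⊕ Fin m) (Fin n ⊕ Fin m) ℂ)
    (z : ℂ) : Matrix (Fin n ⊕ Fin m) (Fin n ⊕ Fin m) ℂ :=
  z ^ 2 • (Pn n m - 1) + z • H - 1

section aux
variable {n m : ℕ}

noncomputable def Qm (n m : ℕ) : Matrix (Fin n ⊕ Fin m) (Fin n ⊕ Fin m) ℂ :=
  Matrix.fromBlocks 0 0 0 1

lemma Pn_mul_Q : Pn n m * Qm n m = 0 := by
  simp [Pn, Qm, Matrix.fromBlocks_multiply]

lemma one_sub_Pn : (1 : Matrix (Fin n ⊕ Fin m) (Fin n ⊕ Fin m) ℂ) - Pn n m = Qm n m := by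
  ext (i|i) (j|j) <;> simp [Pn, Qm, Matrix.one_apply]

lemma gam_mul_Q (H : Matrix (Fin n ⊕ Fin m) (Fin n ⊕ Fin m) ℂ) (w : ℂ) :
    gam H w * Qm n m = (-w ^ 2 - 1) • Qm n m + w • (H * Qm n m) := by
  have hP : (Pn n m - 1) * Qm n m = -Qm n m := by
    rw [Matrix.sub_mul, Pn_mul_Q, Matrix.one_mul]
    simp
  rw [gam, Matrix.sub_mul, Matrix.add_mul, Matrix.smul_mul, Matrix.smul_mul, hP,
    Matrix.one_mul]
  match_scalars <;> ring

lemma key (H : Matrix (Fin n ⊕ Fin m) (Fin n ⊕ Fin m) ℂ) (z : ℂ) (hz : z ≠ 0) :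
    gam H z⁻¹ * Qm n m = (z⁻¹ ^ 2) • (gam H z * Qm n m) := by
  rw [gam_mul_Q, gam_mul_Q]
  rw [smul_add, smul_smul, smul_smul]
  congr 1
  · congr 1
    field_simp
    ring
  · congr 1
    field_simp
    try ring

end aux

theorem stmt12 {n m : ℕ} (H : Matrix (Fin n ⊕ Fin m) (Fin n ⊕ Fin m) ℂ)
    (hH : H.IsHermitian) (z : ℂ) (hz : z ≠ 0)
    (hdet : IsUnit (gam H z).det) :
    ((-(gam H z)⁻¹ * gam H z⁻¹).toBlocks₁₁).det =
      (-1 : ℂ) ^ n * z ^ (2 * m) * (gam H z⁻¹).det / (gam H z).det := by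
  set M := -(gam H z)⁻¹ * gam H z⁻¹ with hM
  have hMQ : M * Qm n m = (-(z⁻¹ ^ 2)) • Qm n m := by
    rw [hM, Matrix.mul_assoc, key H z hz, Matrix.mul_smul, Matrix.neg_mul, ← Matrix.mul_assoc,
      Matrix.nonsing_inv_mul _ hdet, Matrix.one_mul]
    rw [smul_neg, neg_smul]
  -- entrywise consequences
  have hcol : ∀ a (j : Fin m), M a (Sum.inr j) = (-(z⁻¹ ^ 2)) • (Qm n m) a (Sum.inr j) := by
    intro a j
    have := congrFun (congrFun hMQ a) (Sum.inr j)
    rw [Matrix.mul_apply] at this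
    simpa [Qm, Matrix.fromBlocks, Fintype.sum_sum_type, Matrix.one_apply, Finset.mul_sum,
      mul_ite, Finset.sum_ite_eq'] using this
  have h12 : M.toBlocks₁₂ = 0 := by
    ext i j
    have := hcol (Sum.inl i) j
    simpa [Matrix.toBlocks₁₂, Qm, Matrix.fromBlocks] using this
  have h22 : M.toBlocks₂₂ = (-(z⁻¹ ^ 2)) • (1 : Matrix (Fin m) (Fin m) ℂ) := by
    ext i j
    have := hcol (Sum.inr i) j
    simpa [Matrix.toBlocks₂₂, Qm, Matrix.fromBlocks, Matrix.one_apply] using this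
  have hdetM : M.det = M.toBlocks₁₁.det * ((-(z⁻¹ ^ 2)) ^ m) := by
    conv_lhs => rw [← Matrix.fromBlocks_toBlocks M, h12, h22]
    rw [Matrix.det_fromBlocks_zero₁₂]
    rw [Matrix.det_smul, Matrix.det_one]
    simp [Fintype.card_fin]
  have hdetM' : M.det = (-1 : ℂ) ^ (n + m) * (gam H z).det⁻¹ * (gam H z⁻¹).det := by
    rw [hM, Matrix.det_mul, Matrix.det_neg, Matrix.det_nonsing_inv]
    simp [Fintype.card_sum, Ring.inverse_eq_inv']
    try ring
  have ha : (gam H z).det ≠ 0 := hdet.ne_zero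
  have hz2 : (-(z⁻¹ ^ 2)) ^ m ≠ 0 := by
    apply pow_ne_zero
    simp [hz]
  have heq : M.toBlocks₁₁.det * ((-(z⁻¹ ^ 2)) ^ m) =
      (-1 : ℂ) ^ (n + m) * (gam H z).det⁻¹ * (gam H z⁻¹).det := by
    rw [← hdetM, hdetM']
  field_simp at heq ⊢
  set u : ℂ := (-1) ^ m with hu'
  have hu : u * u = 1 := by
    rw [hu', ← pow_add, ← two_mul, pow_mul]; norm_num
  have hw : (-(1 / z ^ 2)) ^ m * z ^ (2 * m) = u := by
    rw [hu', pow_mul, ← mul_pow]; congr 1; field_simp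
  linear_combination u * z ^ (2 * m) * heq - u * M.toBlocks₁₁.det * (gam H z).det * hw +
    ((-1 : ℂ) ^ n * (gam H (1 / z)).det * z ^ (2 * m) -
      M.toBlocks₁₁.det * (gam H z).det) * hu - (-1 : ℂ) ^ n * (gam H (1 / z)).det * z ^ (2 * m) * u * hu'
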